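/- Let X be a finite set of M points, V the Vandermonde matrix at X of an orthonormal basis (for the counting measure) of P_{2n}^d(X), u ≥ 0 with ‖V^t u − V^t 𝟙‖_2 = ε and ε√M < 1, and (T_{2n}, w) the formula from the nonzero entries of u. Then for every polynomial p of degree ≤ n: ‖p‖_{ℓ²(X)} ≤ (1 − ε√M)^{−1/2} ‖p‖_{ℓ²_w(T_{2n})}. -/
import Mathlib


open MvPolynomial

/-- Proposition 2, first inequality: with a near-exact nonnegative formula of
moment residual `ε` (for an orthonormal basis of `P_{2n}^d(X)` with respect to
the counting measure) and `ε√M < 1`, for every polynomial `p` of degree at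
most `n`: `‖p‖_{ℓ²(X)} ≤ (1 − ε√M)^{-1/2} ‖p‖_{ℓ²_w(T_{2n})}`. -/
theorem prop2_first_inequality
    (d n M N : ℕ) (x : Fin M → (Fin d → ℝ))
    (ψ : Fin N → (Fin M → ℝ))
    (hψpoly : ∀ k, ∃ q : MvPolynomial (Fin d) ℝ,
      q.totalDegree ≤ 2 * n ∧ ∀ i, ψ k i = eval (x i) q)
    (horth : ∀ j k, ∑ i, ψ j i * ψ k i = if j = k then 1 else 0)
    (hspan : ∀ q : MvPolynomial (Fin d) ℝ, q.totalDegree ≤ 2 * n →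
      ∃ c : Fin N → ℝ, ∀ i, eval (x i) q = ∑ k, c k * ψ k i)
    (u : Fin M → ℝ) (hu : ∀ i, 0 ≤ u i) (ε : ℝ)
    (hres : Real.sqrt (∑ k, (∑ i, u i * ψ k i - ∑ i, ψ k i) ^ 2) = ε)
    (hε : ε * Real.sqrt M < 1) :
    ∀ p : MvPolynomial (Fin d) ℝ, p.totalDegree ≤ n →
      Real.sqrt (∑ i, (eval (x i) p) ^ 2)
        ≤ Real.sqrt (1 - ε * Real.sqrt M)⁻¹ *
            Real.sqrt (∑ i, u i * (eval (x i) p) ^ 2) := by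
  intro p hp
  rcases Nat.eq_zero_or_pos M with hM | hM
  · subst hM
    simp only [Finset.univ_eq_empty, Finset.sum_empty, Real.sqrt_zero]
    positivity
  set S : ℝ := ∑ i, (eval (x i) p) ^ 2 with hS
  set Q : ℝ := ∑ i, u i * (eval (x i) p) ^ 2 with hQ
  have hε0 : 0 ≤ ε := hres ▸ Real.sqrt_nonneg _
  have hS0 : 0 ≤ S := Finset.sum_nonneg fun i _ => sq_nonneg _
  have hQ0 : 0 ≤ Q := Finset.sum_nonneg fun i _ => mul_nonneg (hu i) (sq_nonneg _)
  have hεM0 : 0 < 1 - ε * Real.sqrt M := by linarith [mul_nonneg hε0 (Real.sqrt_nonneg (M:ℝ))]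
  -- p² has degree ≤ 2n
  have hpd : (p * p).totalDegree ≤ 2 * n := by
    calc (p * p).totalDegree ≤ p.totalDegree + p.totalDegree := totalDegree_mul p p
    _ ≤ n + n := add_le_add hp hp
    _ = 2 * n := (two_mul n).symm
  obtain ⟨c, hc⟩ := hspan (p * p) hpd
  have hceval : ∀ i, (eval (x i) p) ^ 2 = ∑ k, c k * ψ k i := by
    intro i
    rw [pow_two, ← eval_mul]
    exact hc i
  -- Parseval: ∑ c k ^ 2 = ∑ p_i^4
  have hParseval : ∑ k, (c k) ^ 2 = ∑ i, ((eval (x i) p) ^ 2) ^ 2 := by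
    have h1 : ∀ i, ((eval (x i) p) ^ 2) ^ 2 = ∑ k, ∑ j, (c k * c j) * (ψ k i * ψ j i) := by
      intro i
      rw [hceval i, sq, Finset.sum_mul_sum]
      exact Finset.sum_congr rfl fun k _ => Finset.sum_congr rfl fun j _ => by ring
    have h2 : ∑ i, ((eval (x i) p) ^ 2) ^ 2
        = ∑ k, ∑ j, (c k * c j) * ∑ i, ψ k i * ψ j i := by
      calc ∑ i, ((eval (x i) p) ^ 2) ^ 2
          = ∑ i, ∑ k, ∑ j, (c k * c j) * (ψ k i * ψ j i) :=
            Finset.sum_congr rfl fun i _ => h1 i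
      _ = ∑ k, ∑ j, (c k * c j) * ∑ i, ψ k i * ψ j i := by
          rw [Finset.sum_comm]
          refine Finset.sum_congr rfl fun k _ => ?_
          rw [Finset.sum_comm]
          exact Finset.sum_congr rfl fun j _ => (Finset.mul_sum _ _ _).symm
    rw [h2]
    simp [horth, mul_ite, sq]
  -- error identity
  set e : Fin N → ℝ := fun k => ∑ i, u i * ψ k i - ∑ i, ψ k i with he
  have herr : Q - S = ∑ k, c k * e k := by
    have : Q - S = ∑ i, (u i - 1) * ∑ k, c k * ψ k i := by
      rw [hQ, hS, ← Finset.sum_sub_distrib]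
      refine Finset.sum_congr rfl fun i _ => ?_
      rw [← hceval i]; ring
    rw [this]
    simp only [Finset.mul_sum, he]
    rw [Finset.sum_comm]
    refine Finset.sum_congr rfl fun k _ => ?_
    rw [mul_sub, Finset.mul_sum, Finset.mul_sum, ← Finset.sum_sub_distrib]
    refine Finset.sum_congr rfl fun i _ => by ring
  -- Cauchy–Schwarz bound
  have hcs : (Q - S) ^ 2 ≤ (∑ k, (c k) ^ 2) * (∑ k, (e k) ^ 2) := by
    rw [herr]; exact Finset.sum_mul_sq_le_sq_mul_sq _ _ _
  have hp4 : ∑ i, ((eval (x i) p) ^ 2) ^ 2 ≤ S ^ 2 :=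
    Finset.sum_sq_le_sq_sum_of_nonneg fun i _ => sq_nonneg _
  have hee : ∑ k, (e k) ^ 2 = ε ^ 2 := by
    rw [← hres, Real.sq_sqrt (Finset.sum_nonneg fun k _ => sq_nonneg _)]
  have hQS : (Q - S) ^ 2 ≤ (S * ε) ^ 2 := by
    calc (Q - S) ^ 2 ≤ (∑ k, (c k) ^ 2) * (∑ k, (e k) ^ 2) := hcs
    _ ≤ S ^ 2 * ε ^ 2 := by
        rw [hee, hParseval]
        exact mul_le_mul_of_nonneg_right hp4 (sq_nonneg _)
    _ = (S * ε) ^ 2 := by ring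
  have hM1 : (1:ℝ) ≤ Real.sqrt M := by
    rw [show (1:ℝ) = Real.sqrt 1 by simp]
    exact Real.sqrt_le_sqrt (by exact_mod_cast hM)
  have hmain : (1 - ε * Real.sqrt M) * S ≤ Q := by
    have h1 : S - Q ≤ S * ε := by nlinarith [mul_nonneg hS0 hε0]
    have h2 : S * ε ≤ S * (ε * Real.sqrt M) :=
      mul_le_mul_of_nonneg_left (le_mul_of_one_le_right hε0 hM1) hS0
    nlinarith
  -- conclude
  have hfin : S ≤ (1 - ε * Real.sqrt M)⁻¹ * Q := by
    rw [← div_eq_inv_mul, le_div_iff₀ hεM0]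
    linarith [hmain]
  calc Real.sqrt S ≤ Real.sqrt ((1 - ε * Real.sqrt M)⁻¹ * Q) := Real.sqrt_le_sqrt hfin
  _ = Real.sqrt (1 - ε * Real.sqrt M)⁻¹ * Real.sqrt Q :=
      Real.sqrt_mul (inv_nonneg.mpr hεM0.le) Q
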